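/- Let p > 4 and let δ ∈ (0, 1/2). Set θ = φ = (1+2δ)/p, and define u(n) = n^{-2/p}(log n)^{-θ} for n ≥ 3 (u(n)=0 for n ≤ 2), μ(n) = n for n ≥ 3 (μ(n)=1 for n ≤ 2), a(n) = (log n)^δ for n ≥ 3 (a(n)=1 for n ≤ 2). Then ∑_n μ(n) a(n) u(n)^p < ∞, while ∑_{n≥3} μ(n) · u(n)^{p-2} · u(n)² · log(u(n)²) = -∞. -/

import Mathlib

open Real Filter Set

private lemma helper1 (δ : ℝ) (hδ : 0 < δ) (x : ℝ) (hx : 2 ≤ x) :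
    δ * ((x + 1) * Real.log (x + 1) ^ (1 + δ))⁻¹ ≤
      Real.log x ^ (-δ) - Real.log (x + 1) ^ (-δ) := by
  set F : ℝ → ℝ := fun y => Real.log y ^ (-δ) with hF
  have hder : ∀ y : ℝ, 1 < y → HasDerivAt F (-δ * Real.log y ^ (-δ - 1) * y⁻¹) y := by
    intro y hy
    have hl : Real.log y ≠ 0 := ne_of_gt (Real.log_pos hy)
    exact (Real.hasDerivAt_rpow_const (Or.inl hl)).comp y (Real.hasDerivAt_log (by linarith))
  have hcont : ContinuousOn F (Set.Icc x (x + 1)) := by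
    intro y hy
    exact ((hder y (by have := hy.1; linarith)).continuousAt).continuousWithinAt
  obtain ⟨c, hc, hceq⟩ := exists_hasDerivAt_eq_slope F
      (fun y => -δ * Real.log y ^ (-δ - 1) * y⁻¹) (by linarith) hcont
      (fun y hy => hder y (by have := hy.1; linarith))
  have hc1 : 1 < c := by have := hc.1; linarith
  have hlc : 0 < Real.log c := Real.log_pos hc1
  have hlx1 : 0 < Real.log (x + 1) := Real.log_pos (by linarith)
  have heq : F x - F (x + 1) = δ * Real.log c ^ (-δ - 1) * c⁻¹ := by
    have : (fun y => -δ * Real.log y ^ (-δ - 1) * y⁻¹) c = (F (x + 1) - F x) / (x + 1 - x) :=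
      hceq
    simp only [add_sub_cancel_left, div_one] at this
    linarith [this]
  rw [heq]
  have h1 : Real.log (x + 1) ^ (-δ - 1) ≤ Real.log c ^ (-δ - 1) :=
    Real.rpow_le_rpow_of_nonpos hlc (Real.log_le_log (by linarith) (by linarith [hc.2]))
      (by linarith)
  have h2 : (x + 1)⁻¹ ≤ c⁻¹ := by
    apply inv_anti₀ (by linarith) (le_of_lt hc.2)
  have hrw : ((x + 1) * Real.log (x + 1) ^ (1 + δ))⁻¹ =
      Real.log (x + 1) ^ (-δ - 1) * (x + 1)⁻¹ := by
    rw [mul_inv, ← Real.rpow_neg hlx1.le]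
    ring_nf
  rw [hrw]
  have hc0 : (0:ℝ) < c⁻¹ := inv_pos.2 (by linarith [hc.1])
  calc δ * (Real.log (x + 1) ^ (-δ - 1) * (x + 1)⁻¹)
      ≤ δ * (Real.log c ^ (-δ - 1) * c⁻¹) := by
        apply mul_le_mul_of_nonneg_left _ hδ.le
        exact mul_le_mul h1 h2 (inv_nonneg.2 (by linarith)) (Real.rpow_nonneg hlc.le _)
    _ = δ * Real.log c ^ (-δ - 1) * c⁻¹ := by ring

private lemma helper2 (x : ℝ) (hx : 2 ≤ x) :
    Real.log (Real.log (x + 1)) - Real.log (Real.log x) ≤ (x * Real.log x)⁻¹ := by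
  set G : ℝ → ℝ := fun y => Real.log (Real.log y) with hG
  have hder : ∀ y : ℝ, 1 < y → HasDerivAt G ((Real.log y)⁻¹ * y⁻¹) y := by
    intro y hy
    have hl : Real.log y ≠ 0 := ne_of_gt (Real.log_pos hy)
    exact (Real.hasDerivAt_log hl).comp y (Real.hasDerivAt_log (by linarith))
  have hcont : ContinuousOn G (Set.Icc x (x + 1)) := by
    intro y hy
    exact ((hder y (by have := hy.1; linarith)).continuousAt).continuousWithinAt
  obtain ⟨c, hc, hceq⟩ := exists_hasDerivAt_eq_slope G
      (fun y => (Real.log y)⁻¹ * y⁻¹) (by linarith) hcont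
      (fun y hy => hder y (by have := hy.1; linarith))
  have hc1 : 1 < c := by have := hc.1; linarith
  have hlc : 0 < Real.log c := Real.log_pos hc1
  have hlx : 0 < Real.log x := Real.log_pos (by linarith)
  have heq : G (x + 1) - G x = (Real.log c)⁻¹ * c⁻¹ := by
    have : ((Real.log c)⁻¹ * c⁻¹) = (G (x + 1) - G x) / (x + 1 - x) := hceq
    simp only [add_sub_cancel_left, div_one] at this
    linarith [this]
  rw [heq, mul_inv]
  have h1 : (Real.log c)⁻¹ ≤ (Real.log x)⁻¹ :=
    inv_anti₀ hlx (Real.log_le_log (by linarith) hc.1.le)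
  have h2 : c⁻¹ ≤ x⁻¹ := inv_anti₀ (by linarith) hc.1.le
  calc (Real.log c)⁻¹ * c⁻¹ ≤ (Real.log x)⁻¹ * x⁻¹ :=
        mul_le_mul h1 h2 (inv_nonneg.2 (by linarith [hc.1])) (inv_nonneg.2 hlx.le)
    _ = x⁻¹ * (Real.log x)⁻¹ := mul_comm _ _

private lemma upow (p δ : ℝ) (hp : 0 < p) (N : ℝ) (hN : 0 < N) (hL : 0 < Real.log N) :
    (N ^ (-(2 / p)) * Real.log N ^ (-((1 + 2 * δ) / p))) ^ p
      = N ^ (-2 : ℝ) * Real.log N ^ (-(1 + 2 * δ)) := by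
  have hpne : p ≠ 0 := ne_of_gt hp
  rw [Real.mul_rpow (Real.rpow_nonneg hN.le _) (Real.rpow_nonneg hL.le _),
    ← Real.rpow_mul hN.le, ← Real.rpow_mul hL.le]
  have e1 : -(2 / p) * p = -2 := by field_simp
  have e2 : -((1 + 2 * δ) / p) * p = -(1 + 2 * δ) := by field_simp
  rw [e1, e2]

private lemma log_gt_one {N : ℝ} (hN : 3 ≤ N) : 1 < Real.log N := by
  rw [Real.lt_log_iff_exp_lt (by linarith)]
  calc Real.exp 1 < 2.7182818286 := Real.exp_one_lt_d9
    _ ≤ N := by linarith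

private lemma bertrand_summable (δ : ℝ) (hδ : 0 < δ) :
    Summable (fun n : ℕ => (((n : ℝ) + 3) * Real.log ((n : ℝ) + 3) ^ (1 + δ))⁻¹) := by
  set g : ℕ → ℝ := fun n => (((n : ℝ) + 3) * Real.log ((n : ℝ) + 3) ^ (1 + δ))⁻¹ with hg
  have hgnn : ∀ n, 0 ≤ g n := by
    intro n
    apply inv_nonneg.2
    exact mul_nonneg (by positivity) (Real.rpow_nonneg (Real.log_nonneg (by linarith)) _)
  set F : ℕ → ℝ := fun k => Real.log ((k : ℝ) + 2) ^ (-δ) with hFdef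
  have hkey : ∀ k : ℕ, g k ≤ δ⁻¹ * (F k - F (k + 1)) := by
    intro k
    have h := helper1 δ hδ ((k : ℝ) + 2) (by push_cast; linarith [Nat.cast_nonneg (α := ℝ) k])
    have hc : ((k : ℝ) + 2) + 1 = (k : ℝ) + 3 := by ring
    have hc2 : ((k : ℕ) + 1 : ℕ) + (2:ℝ) = (k : ℝ) + 3 := by push_cast; ring
    rw [hc] at h
    have : δ * g k ≤ F k - F (k + 1) := by
      simp only [hFdef, hg, hc2, hc]
      exact h
    calc g k = δ⁻¹ * (δ * g k) := by field_simp
      _ ≤ δ⁻¹ * (F k - F (k + 1)) :=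
        mul_le_mul_of_nonneg_left this (inv_nonneg.2 hδ.le)
  apply summable_of_sum_range_le (c := δ⁻¹ * F 0) hgnn
  intro n
  calc ∑ i ∈ Finset.range n, g i ≤ ∑ i ∈ Finset.range n, δ⁻¹ * (F i - F (i + 1)) :=
        Finset.sum_le_sum fun i _ => hkey i
    _ = δ⁻¹ * ∑ i ∈ Finset.range n, (F i - F (i + 1)) := by rw [Finset.mul_sum]
    _ = δ⁻¹ * (F 0 - F n) := by rw [Finset.sum_range_sub' F]
    _ ≤ δ⁻¹ * F 0 := by
        apply mul_le_mul_of_nonneg_left _ (inv_nonneg.2 hδ.le)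
        have : 0 ≤ F n := Real.rpow_nonneg (Real.log_nonneg (by push_cast; linarith [Nat.cast_nonneg (α := ℝ) n])) _
        linarith

theorem stmt_12 (p δ θ : ℝ) (hp : 4 < p) (hδ : δ ∈ Set.Ioo (0 : ℝ) (1 / 2))
    (hθ : θ = (1 + 2 * δ) / p)
    (u μ a : ℕ → ℝ)
    (hu : ∀ n : ℕ, u n = if 3 ≤ n then (n : ℝ) ^ (-(2 / p)) * Real.log n ^ (-θ) else 0)
    (hμ : ∀ n : ℕ, μ n = if 3 ≤ n then (n : ℝ) else 1)
    (ha : ∀ n : ℕ, a n = if 3 ≤ n then Real.log n ^ δ else 1) :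
    Summable (fun n : ℕ => μ n * a n * u n ^ p) ∧
      Filter.Tendsto
        (fun N : ℕ => ∑ n ∈ Finset.range N,
          μ (n + 3) * u (n + 3) ^ (p - 2) * u (n + 3) ^ 2 * Real.log (u (n + 3) ^ 2))
        Filter.atTop Filter.atBot := by
  obtain ⟨hδ0, hδhalf⟩ := hδ
  have hp0 : (0:ℝ) < p := by linarith
  have hpne : p ≠ 0 := ne_of_gt hp0
  -- value of the summand for n ≥ 3
  have key : ∀ n : ℕ, 3 ≤ n →
      μ n * a n * u n ^ p = ((n : ℝ) * Real.log n ^ (1 + δ))⁻¹ := by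
    intro n hn
    have hN3 : (3:ℝ) ≤ (n:ℝ) := by exact_mod_cast hn
    have hN0 : (0:ℝ) < (n:ℝ) := by linarith
    have hL1 : 1 < Real.log n := log_gt_one hN3
    have hL0 : 0 < Real.log n := by linarith
    rw [hu, hμ, ha, if_pos hn, if_pos hn, if_pos hn, hθ,
      upow p δ hp0 _ hN0 hL0]
    have e1 : (1:ℝ) + (-2) = -1 := by norm_num
    have e2 : δ + -(1 + 2 * δ) = -(1 + δ) := by ring
    calc (n:ℝ) * Real.log n ^ δ * ((n:ℝ) ^ (-2:ℝ) * Real.log n ^ (-(1 + 2 * δ)))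
        = ((n:ℝ) ^ (1:ℝ) * (n:ℝ) ^ (-2:ℝ)) *
            (Real.log n ^ δ * Real.log n ^ (-(1 + 2 * δ))) := by
          rw [Real.rpow_one]; ring
      _ = (n:ℝ) ^ (-1:ℝ) * Real.log n ^ (-(1 + δ)) := by
          rw [← Real.rpow_add hN0, ← Real.rpow_add hL0, e1, e2]
      _ = ((n : ℝ) * Real.log n ^ (1 + δ))⁻¹ := by
          rw [mul_inv, Real.rpow_neg hN0.le, Real.rpow_neg hL0.le, Real.rpow_one]
  constructor
  · rw [← summable_nat_add_iff 3]
    have : ∀ n : ℕ, μ (n + 3) * a (n + 3) * u (n + 3) ^ p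
        = (((n : ℝ) + 3) * Real.log ((n : ℝ) + 3) ^ (1 + δ))⁻¹ := by
      intro n
      rw [key (n + 3) (by omega)]
      push_cast
      ring_nf
    simpa only [this] using bertrand_summable δ hδ0
  · -- part 2
    set G : ℕ → ℝ := fun n => Real.log (Real.log ((n : ℝ) + 3)) with hG
    have hterm : ∀ n : ℕ,
        μ (n + 3) * u (n + 3) ^ (p - 2) * u (n + 3) ^ 2 * Real.log (u (n + 3) ^ 2)
          ≤ -(4 / p) * (G (n + 1) - G n) := by
      intro n
      have hn3 : 3 ≤ n + 3 := by omega
      have hN3 : (3:ℝ) ≤ ((n + 3 : ℕ) : ℝ) := by exact_mod_cast hn3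
      have hN0 : (0:ℝ) < ((n + 3 : ℕ) : ℝ) := by linarith
      set M : ℝ := ((n + 3 : ℕ) : ℝ) with hM
      set L : ℝ := Real.log M with hLdef
      have hL1 : 1 < L := log_gt_one hN3
      have hL0 : 0 < L := by linarith
      have hueq : u (n + 3) = M ^ (-(2 / p)) * L ^ (-θ) := by
        rw [hu, if_pos hn3]
      have hupos : 0 < u (n + 3) := by
        rw [hueq]
        exact mul_pos (Real.rpow_pos_of_pos hN0 _) (Real.rpow_pos_of_pos hL0 _)
      have hupow : u (n + 3) ^ (p - 2) * u (n + 3) ^ 2 = u (n + 3) ^ p := by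
        rw [← Real.rpow_natCast (u (n + 3)) 2, ← Real.rpow_add hupos]
        norm_num
      have huval : u (n + 3) ^ p = M ^ (-2:ℝ) * L ^ (-(1 + 2 * δ)) := by
        rw [hueq, hθ]
        exact upow p δ hp0 M hN0 hL0
      have hlogu : Real.log (u (n + 3) ^ 2) ≤ -(4 / p) * L := by
        rw [Real.log_pow]
        have : Real.log (u (n + 3)) = -(2 / p) * L + (-θ) * Real.log L := by
          rw [hueq, Real.log_mul (ne_of_gt (Real.rpow_pos_of_pos hN0 _))
            (ne_of_gt (Real.rpow_pos_of_pos hL0 _)),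
            Real.log_rpow hN0, Real.log_rpow hL0]
        have hθ0 : 0 < θ := by rw [hθ]; positivity
        have hlogL : 0 < Real.log L := Real.log_pos hL1
        have hle : Real.log (u (n + 3)) ≤ -(2 / p) * L := by
          rw [this]
          nlinarith
        have h4 : -(4 / p) * L = 2 * (-(2 / p) * L) := by ring
        push_cast
        rw [h4]
        linarith
      have hμval : μ (n + 3) = M := by rw [hμ, if_pos hn3]
      have hMu : 0 < M * u (n + 3) ^ p := mul_pos hN0 (Real.rpow_pos_of_pos hupos p)
      have step1 : μ (n + 3) * u (n + 3) ^ (p - 2) * u (n + 3) ^ 2 * Real.log (u (n + 3) ^ 2)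
          ≤ (M * u (n + 3) ^ p) * (-(4 / p) * L) := by
        have : μ (n + 3) * u (n + 3) ^ (p - 2) * u (n + 3) ^ 2 * Real.log (u (n + 3) ^ 2)
            = (M * u (n + 3) ^ p) * Real.log (u (n + 3) ^ 2) := by
          rw [hμval, ← hupow]; ring
        rw [this]
        exact mul_le_mul_of_nonneg_left hlogu hMu.le
      have step2 : (M * u (n + 3) ^ p) * (-(4 / p) * L)
          = -(4 / p) * (M ^ (-1:ℝ) * L ^ (-(2 * δ))) := by
        rw [huval]
        have e1 : M * M ^ (-2:ℝ) = M ^ (-1:ℝ) := by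
          rw [show M * M ^ (-2:ℝ) = M ^ (1:ℝ) * M ^ (-2:ℝ) by rw [Real.rpow_one],
            ← Real.rpow_add hN0]
          norm_num
        have e2 : L ^ (-(1 + 2 * δ)) * L = L ^ (-(2 * δ)) := by
          nth_rewrite 2 [← Real.rpow_one L]
          rw [← Real.rpow_add hL0]
          ring_nf
        calc M * (M ^ (-2:ℝ) * L ^ (-(1 + 2 * δ))) * (-(4 / p) * L)
            = -(4 / p) * ((M * M ^ (-2:ℝ)) * (L ^ (-(1 + 2 * δ)) * L)) := by ring
          _ = -(4 / p) * (M ^ (-1:ℝ) * L ^ (-(2 * δ))) := by rw [e1, e2]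
      have step3 : (M * L)⁻¹ ≤ M ^ (-1:ℝ) * L ^ (-(2 * δ)) := by
        rw [mul_inv, Real.rpow_neg hN0.le, Real.rpow_one, Real.rpow_neg hL0.le]
        apply mul_le_mul_of_nonneg_left _ (inv_nonneg.2 hN0.le)
        apply inv_anti₀ (Real.rpow_pos_of_pos hL0 _)
        calc L ^ (2 * δ) ≤ L ^ (1:ℝ) :=
              Real.rpow_le_rpow_of_exponent_le hL1.le (by linarith)
          _ = L := Real.rpow_one L
      have step4 : G (n + 1) - G n ≤ (M * L)⁻¹ := by
        have h := helper2 M (by linarith)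
        have hc : M + 1 = ((n + 1 : ℕ) : ℝ) + 3 := by rw [hM]; push_cast; ring
        have hc2 : M = ((n : ℕ) : ℝ) + 3 := by rw [hM]; push_cast; ring
        simp only [hG]
        rw [← hc, ← hc2, ← hLdef]
        exact h
      have hneg : -(4 / p) ≤ 0 := by
        have : 0 < 4 / p := by positivity
        linarith
      calc μ (n + 3) * u (n + 3) ^ (p - 2) * u (n + 3) ^ 2 * Real.log (u (n + 3) ^ 2)
          ≤ (M * u (n + 3) ^ p) * (-(4 / p) * L) := step1
        _ = -(4 / p) * (M ^ (-1:ℝ) * L ^ (-(2 * δ))) := step2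
        _ ≤ -(4 / p) * (G (n + 1) - G n) := by
            apply mul_le_mul_of_nonpos_left _ hneg
            exact le_trans step4 step3
    have hsum : ∀ N : ℕ,
        ∑ n ∈ Finset.range N,
            μ (n + 3) * u (n + 3) ^ (p - 2) * u (n + 3) ^ 2 * Real.log (u (n + 3) ^ 2)
          ≤ -(4 / p) * (G N - G 0) := by
      intro N
      calc ∑ n ∈ Finset.range N,
              μ (n + 3) * u (n + 3) ^ (p - 2) * u (n + 3) ^ 2 * Real.log (u (n + 3) ^ 2)
          ≤ ∑ n ∈ Finset.range N, -(4 / p) * (G (n + 1) - G n) :=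
            Finset.sum_le_sum fun n _ => hterm n
        _ = -(4 / p) * ∑ n ∈ Finset.range N, (G (n + 1) - G n) := by rw [Finset.mul_sum]
        _ = -(4 / p) * (G N - G 0) := by rw [Finset.sum_range_sub G]
    have hGtop : Tendsto G atTop atTop := by
      have h1 : Tendsto (fun n : ℕ => (n : ℝ) + 3) atTop atTop :=
        tendsto_atTop_add_const_right atTop 3 tendsto_natCast_atTop_atTop
      exact Real.tendsto_log_atTop.comp ((Real.tendsto_log_atTop.comp h1))
    have hbot : Tendsto (fun N : ℕ => -(4 / p) * (G N - G 0)) atTop atBot := by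
      apply Tendsto.const_mul_atTop_of_neg
      · have : 0 < 4 / p := by positivity
        linarith
      · have := tendsto_atTop_add_const_right atTop (-(G 0)) hGtop
        simpa [sub_eq_add_neg] using this
    exact tendsto_atBot_mono hsum hbot
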